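/- Let W > 0 be a random variable with Laplace transform φ_W(u) = E[e^{-uW}], and suppose φ_W is invertible on its range. If E is a standard exponential random variable independent of W, then the random variable φ_W(E/W) is uniformly distributed on (0,1). -/

import Mathlib

open MeasureTheory ProbabilityTheory
open scoped ENNReal NNReal

theorem stmt_11 {Ω : Type*} [MeasurableSpace Ω] (P : Measure Ω) [IsProbabilityMeasure P]
    (W E : Ω → ℝ) (hWm : Measurable W) (hEm : Measurable E)
    (hWpos : ∀ ω, 0 < W ω)
    (hEcdf : ∀ t : ℝ, P {ω | E ω ≤ t} = ENNReal.ofReal (1 - Real.exp (-t)))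
    (hind : IndepFun E W P)
    (φ : ℝ → ℝ) (hφ : ∀ u, φ u = ∫ ω, Real.exp (-u * W ω) ∂P)
    (hinj : Set.InjOn φ (Set.Ici 0)) :
    (P {ω | φ (E ω / W ω) ∈ Set.Ioo (0:ℝ) 1} = 1) ∧
      ∀ t ∈ Set.Ioo (0:ℝ) 1, P {ω | φ (E ω / W ω) ≤ t} = ENNReal.ofReal t := by
  -- integrability of e^{-uW} for u ≥ 0
  have hInt : ∀ u : ℝ, 0 ≤ u → Integrable (fun ω => Real.exp (-u * W ω)) P := by
    intro u hu
    refine (integrable_const (1:ℝ)).mono' ?_ ?_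
    · exact (Real.measurable_exp.comp (hWm.const_mul (-u))).aestronglyMeasurable
    · refine Filter.Eventually.of_forall fun ω => ?_
      rw [Real.norm_eq_abs, abs_of_pos (Real.exp_pos _)]
      exact Real.exp_le_one_iff.mpr (mul_nonpos_of_nonpos_of_nonneg (neg_nonpos.mpr hu) (hWpos ω).le)
  -- φ 0 = 1
  have hφ0 : φ 0 = 1 := by
    rw [hφ]; simp [integral_const]
  -- strict bounds for u > 0
  have hlt1 : ∀ u : ℝ, 0 < u → φ u < 1 := by
    intro u hu
    have hi := hInt u hu.le
    have h1 : (0:ℝ) < ∫ ω, (1 - Real.exp (-u * W ω)) ∂P := by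
      rw [integral_pos_iff_support_of_nonneg]
      · have hsupp : Function.support (fun ω => 1 - Real.exp (-u * W ω)) = Set.univ := by
          refine Set.eq_univ_iff_forall.mpr fun ω => ?_
          have : Real.exp (-u * W ω) < 1 :=
            Real.exp_lt_one_iff.mpr (mul_neg_of_neg_of_pos (neg_neg_of_pos hu) (hWpos ω))
          simp only [Function.mem_support]
          intro h; linarith
        rw [hsupp]
        simp [Measure.measure_univ_pos.mpr (IsProbabilityMeasure.ne_zero P)]
      · intro ω
        have : Real.exp (-u * W ω) ≤ 1 :=
          Real.exp_le_one_iff.mpr (mul_nonpos_of_nonpos_of_nonneg (neg_nonpos.mpr hu.le) (hWpos ω).le)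
        simpa using this
      · exact (integrable_const 1).sub hi
    rw [integral_sub (integrable_const 1) hi, integral_const] at h1
    simp only [measure_univ, ENNReal.toReal_one, probReal_univ, smul_eq_mul, one_mul] at h1
    rw [hφ]; linarith
  have hpos : ∀ u : ℝ, 0 ≤ u → 0 < φ u := by
    intro u hu
    rw [hφ]
    rw [integral_pos_iff_support_of_nonneg (fun ω => (Real.exp_pos _).le) (hInt u hu)]
    have hsupp : Function.support (fun ω => Real.exp (-u * W ω)) = Set.univ :=
      Set.eq_univ_iff_forall.mpr fun ω => (Real.exp_pos _).ne'
    rw [hsupp]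
    simp [Measure.measure_univ_pos.mpr (IsProbabilityMeasure.ne_zero P)]
  -- strict antitone
  have hanti : StrictAntiOn φ (Set.Ici 0) := by
    intro x hx y hy hxy
    have hle : φ y ≤ φ x := by
      rw [hφ, hφ]
      refine integral_mono (hInt y (le_trans hx hxy.le)) (hInt x hx) fun ω => ?_
      exact Real.exp_le_exp.mpr (by nlinarith [hWpos ω])
    refine lt_of_le_of_ne hle fun h => ?_
    exact absurd (hinj hy hx h) (ne_of_gt hxy)
  -- E is a.s. positive
  have hEneg : P {ω | E ω < 0} = 0 := by
    refine measure_mono_null (fun ω hω => ?_)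
      (measure_iUnion_null fun n : ℕ => ?_ :
        P (⋃ n : ℕ, {ω | E ω ≤ -(1/(n+1))}) = 0)
    · have hω' : E ω < 0 := hω
      obtain ⟨n, hn⟩ := exists_nat_one_div_lt (show (0:ℝ) < -E ω by linarith)
      exact Set.mem_iUnion.mpr ⟨n, by simpa using (by linarith : E ω ≤ -(1/(n+1)))⟩
    · rw [hEcdf]
      rw [ENNReal.ofReal_eq_zero]
      have : (1:ℝ) ≤ Real.exp (-(-(1/(n+1)))) := Real.one_le_exp (by rw [neg_neg]; positivity)
      linarith
  have hE0 : P {ω | E ω ≤ 0} = 0 := by rw [hEcdf]; simp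
  -- tail formula, strict
  have htail' : ∀ b : ℝ, P {ω | b < E ω} = 1 - ENNReal.ofReal (1 - Real.exp (-b)) := by
    intro b
    have : {ω | b < E ω} = {ω | E ω ≤ b}ᶜ := by ext ω; simp [not_le]
    rw [this, measure_compl (measurableSet_le hEm measurable_const) (measure_ne_top P _),
      hEcdf, measure_univ]
  have htail'' : ∀ b : ℝ, 0 ≤ b → P {ω | b < E ω} = ENNReal.ofReal (Real.exp (-b)) := by
    intro b hb
    rw [htail' b]
    have h1 : Real.exp (-b) ≤ 1 := Real.exp_le_one_iff.mpr (by linarith)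
    rw [← ENNReal.ofReal_one, ← ENNReal.ofReal_sub _ (by linarith)]
    norm_num
  -- tail formula, weak
  have htail : ∀ a : ℝ, 0 ≤ a → P {ω | a ≤ E ω} = ENNReal.ofReal (Real.exp (-a)) := by
    intro a ha
    refine le_antisymm ?_ ?_
    · -- upper bound via limit
      have hub : ∀ n : ℕ, P {ω | a ≤ E ω} ≤ ENNReal.ofReal (Real.exp (-(a - 1/(n+1)))) := by
        intro n
        have hsub : {ω | a ≤ E ω} ⊆ {ω | a - 1/(n+1) < E ω} := fun ω hω => by
          have : (0:ℝ) < 1/(n+1) := by positivity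
          simp only [Set.mem_setOf_eq] at *; linarith
        refine le_trans (measure_mono hsub) ?_
        rw [htail' _]
        set x := Real.exp (-(a - 1/(n+1)))
        rw [tsub_le_iff_right]
        calc (1:ℝ≥0∞) = ENNReal.ofReal (x + (1 - x)) := by norm_num
          _ ≤ ENNReal.ofReal x + ENNReal.ofReal (1 - x) := ENNReal.ofReal_add_le
      have hlim : Filter.Tendsto (fun n : ℕ => ENNReal.ofReal (Real.exp (-(a - 1/(n+1)))))
          Filter.atTop (nhds (ENNReal.ofReal (Real.exp (-a)))) := by
        refine (ENNReal.continuous_ofReal.tendsto _).comp ?_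
        have h0 : Filter.Tendsto (fun n : ℕ => a - 1/(n+1 : ℝ)) Filter.atTop (nhds a) := by
          have := tendsto_one_div_add_atTop_nhds_zero_nat (𝕜 := ℝ)
          simpa using (tendsto_const_nhds.sub this : Filter.Tendsto (fun n : ℕ => a - 1/(n+1:ℝ)) Filter.atTop (nhds (a - 0)))
        exact (Real.continuous_exp.tendsto _).comp ((continuous_neg.tendsto _).comp h0)
      exact ge_of_tendsto' hlim hub
    · rw [← htail'' a ha]
      exact measure_mono fun ω (hω : a < E ω) => le_of_lt hω
  -- product formula
  have hprod : ∀ s : ℝ, 0 ≤ s →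
      P {ω | s * W ω ≤ E ω} = ENNReal.ofReal (∫ ω, Real.exp (-s * W ω) ∂P) := by
    intro s hs
    have hmap : P.map (fun ω => (W ω, E ω)) = (P.map W).prod (P.map E) :=
      (indepFun_iff_map_prod_eq_prod_map_map hWm.aemeasurable hEm.aemeasurable).mp hind.symm
    have hS : MeasurableSet {p : ℝ × ℝ | s * p.1 ≤ p.2} :=
      measurableSet_le (measurable_const.mul measurable_fst) measurable_snd
    have h1 : P {ω | s * W ω ≤ E ω}
        = (P.map (fun ω => (W ω, E ω))) {p : ℝ × ℝ | s * p.1 ≤ p.2} := by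
      rw [Measure.map_apply (hWm.prodMk hEm) hS]; rfl
    rw [h1, hmap, Measure.prod_apply hS]
    have h2 : ∀ᵐ w ∂(P.map W), (P.map E) (Prod.mk w ⁻¹' {p : ℝ × ℝ | s * p.1 ≤ p.2})
        = ENNReal.ofReal (Real.exp (-(s * w))) := by
      have hW : ∀ᵐ w ∂(P.map W), 0 < w := by
        rw [MeasureTheory.ae_map_iff hWm.aemeasurable measurableSet_Ioi]
        exact Filter.Eventually.of_forall hWpos
      filter_upwards [hW] with w hw
      have : (Prod.mk w ⁻¹' {p : ℝ × ℝ | s * p.1 ≤ p.2}) = {e | s * w ≤ e} := rfl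
      rw [this, Measure.map_apply hEm (measurableSet_Ici.congr rfl : MeasurableSet {e : ℝ | s * w ≤ e})]
      exact htail (s * w) (mul_nonneg hs hw.le)
    have hmeas : Measurable fun w : ℝ => ENNReal.ofReal (Real.exp (-(s * w))) :=
      ENNReal.measurable_ofReal.comp
        (Real.measurable_exp.comp ((measurable_const.mul measurable_id).neg))
    rw [lintegral_congr_ae h2, lintegral_map hmeas hWm]
    simp only [← neg_mul]
    exact (ofReal_integral_eq_lintegral_ofReal (hInt s hs)
        (Filter.Eventually.of_forall fun ω => (Real.exp_pos _).le)).symm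
  -- continuity of φ on [0, M]
  have hψ : Continuous fun u : ℝ => ∫ ω, Real.exp (-(max u 0) * W ω) ∂P := by
    refine continuous_of_dominated (fun u => (hInt _ (le_max_right u 0)).aestronglyMeasurable)
      (fun u => Filter.Eventually.of_forall fun ω => ?_) (integrable_const 1)
      (Filter.Eventually.of_forall fun ω => ?_)
    · rw [Real.norm_eq_abs, abs_of_pos (Real.exp_pos _)]
      exact Real.exp_le_one_iff.mpr
        (mul_nonpos_of_nonpos_of_nonneg (neg_nonpos.mpr (le_max_right _ _)) (hWpos ω).le)
    · exact Real.continuous_exp.comp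
        (((continuous_id.max continuous_const).neg).mul continuous_const)
  have hcont : ∀ M : ℝ, ContinuousOn φ (Set.Icc 0 M) := by
    intro M
    refine (hψ.continuousOn).congr fun u hu => ?_
    simp only [hφ, max_eq_left hu.1]
  -- φ(n) → 0
  have hφtend : Filter.Tendsto (fun n : ℕ => φ n) Filter.atTop (nhds 0) := by
    have h0 : Filter.Tendsto (fun n : ℕ => ∫ ω, Real.exp (-(n:ℝ) * W ω) ∂P)
        Filter.atTop (nhds (∫ _ : Ω, (0:ℝ) ∂P)) := by
      refine tendsto_integral_of_dominated_convergence (fun _ => (1:ℝ))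
        (fun n => (hInt _ (Nat.cast_nonneg n)).aestronglyMeasurable) (integrable_const 1)
        (fun n => Filter.Eventually.of_forall fun ω => ?_)
        (Filter.Eventually.of_forall fun ω => ?_)
      · rw [Real.norm_eq_abs, abs_of_pos (Real.exp_pos _)]
        exact Real.exp_le_one_iff.mpr
          (mul_nonpos_of_nonpos_of_nonneg (neg_nonpos.mpr (Nat.cast_nonneg n)) (hWpos ω).le)
      · have heq : ∀ n : ℕ, Real.exp (-(n:ℝ) * W ω) = (Real.exp (-W ω))^n := by
          intro n
          rw [show -(n:ℝ) * W ω = (n:ℕ) * (-W ω) by ring, Real.exp_nat_mul]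
        simp only [heq]
        exact tendsto_pow_atTop_nhds_zero_of_lt_one (Real.exp_pos _).le
          (Real.exp_lt_one_iff.mpr (neg_neg_of_pos (hWpos ω)))
    simp only [hφ]
    simpa using h0
  -- E > 0 a.s.
  have hEpos : P {ω | 0 < E ω} = 1 := by
    have hset : {ω | 0 < E ω} = {ω | E ω ≤ 0}ᶜ := by ext ω; simp [not_le]
    rw [hset, measure_compl (measurableSet_le hEm measurable_const) (measure_ne_top P _),
      hE0, measure_univ]
    simp
  constructor
  · refine le_antisymm prob_le_one ?_
    rw [← hEpos]
    refine measure_mono fun ω (hω : 0 < E ω) => ?_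
    have hu : 0 < E ω / W ω := div_pos hω (hWpos ω)
    exact ⟨hpos _ hu.le, hlt1 _ hu⟩
  · intro t ht
    obtain ⟨N, hN⟩ := (hφtend.eventually_lt_const ht.1).exists
    have hmem : t ∈ Set.Icc (φ (N:ℝ)) (φ 0) := ⟨hN.le, by rw [hφ0]; exact ht.2.le⟩
    obtain ⟨s, hsmem, hst⟩ := intermediate_value_Icc' (Nat.cast_nonneg N) (hcont N) hmem
    have hs0 : 0 ≤ s := hsmem.1
    have hae : {ω | φ (E ω / W ω) ≤ t} =ᵐ[P] {ω | s * W ω ≤ E ω} := by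
      have hEnn : ∀ᵐ ω ∂P, 0 ≤ E ω := by
        rw [ae_iff]
        simpa [not_le] using hEneg
      rw [Filter.eventuallyEq_set]
      filter_upwards [hEnn] with ω hω
      have hdiv : (0:ℝ) ≤ E ω / W ω := div_nonneg hω (hWpos ω).le
      show φ (E ω / W ω) ≤ t ↔ s * W ω ≤ E ω
      rw [← hst, hanti.le_iff_ge hdiv hs0, le_div_iff₀ (hWpos ω)]
    rw [measure_congr hae, hprod s hs0, ← hφ s, hst]
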